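/- Let k be an algebraically closed field complete with respect to a nontrivial nonarchimedean absolute value |·|, and let N be a multiplicative seminorm on the polynomial ring k[T] extending |·|. Then there exists a nonempty family of closed balls (B(a_j, r_j))_{j ∈ J} in k (with radii r_j ≥ 0) that is totally ordered by inclusion, such that N(f) = inf_j sup_{y ∈ B(a_j,r_j)} |f(y)| for all f ∈ k[T]. In particular every point of the Berkovich affine line over k is of one of the types I–IV: evaluation at a point of k, a Gauss norm η_{a,r} with r ∈ |k^×|, a Gauss norm η_{a,r} with r ∉ |k^×|, or the infimum of Gauss norms over a nested family of balls with empty intersection. -/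

import Mathlib

noncomputable section

/-- An absolute value is nonarchimedean if it satisfies the ultrametric inequality. -/
def IsNA {F : Type*} [Field F] (v : AbsoluteValue F ℝ) : Prop :=
  ∀ x y : F, v (x + y) ≤ max (v x) (v y)

/-- A field is complete with respect to an absolute value if every Cauchy sequence converges. -/
def SeqComplete {F : Type*} [Field F] (v : AbsoluteValue F ℝ) : Prop :=
  ∀ s : ℕ → F, (∀ ε : ℝ, 0 < ε → ∃ N : ℕ, ∀ m ≥ N, ∀ n ≥ N, v (s m - s n) < ε) →
    ∃ L : F, ∀ ε : ℝ, 0 < ε → ∃ N : ℕ, ∀ n ≥ N, v (s n - L) < ε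

/-- The Gauss norm `N_r(Σ aᵢ Tⁱ) = max_i |aᵢ| rⁱ` on the polynomial ring `k[T]`. -/
def gaussNorm {k : Type*} [Field k] (va : AbsoluteValue k ℝ) (r : ℝ)
    (f : Polynomial k) : ℝ :=
  ⨆ i : ℕ, va (f.coeff i) * r ^ i

/-- The supremum `sup_{y ∈ B(a,r)} |f(y)|` of `|f|` over the closed ball `B(a,r)`. -/
def supBall {k : Type*} [Field k] (va : AbsoluteValue k ℝ) (a : k) (r : ℝ)
    (f : Polynomial k) : ℝ :=
  sSup ((fun y => va (Polynomial.eval y f)) '' {y : k | va (y - a) ≤ r})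

namespace S9

variable {k : Type*} [Field k]

lemma msprod_nonneg {α : Type*} {s : Multiset α} {g : α → ℝ}
    (h0 : ∀ x ∈ s, 0 ≤ g x) : 0 ≤ (s.map g).prod := by
  induction s using Multiset.induction_on with
  | empty => simp
  | cons a s ih =>
    simp only [Multiset.map_cons, Multiset.prod_cons]
    exact mul_nonneg (h0 a (Multiset.mem_cons_self a s))
      (ih fun x hx => h0 x (Multiset.mem_cons_of_mem hx))

lemma msprod_le {α : Type*} {s : Multiset α} {g h : α → ℝ}
    (h0 : ∀ x ∈ s, 0 ≤ g x) (hle : ∀ x ∈ s, g x ≤ h x) :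
    (s.map g).prod ≤ (s.map h).prod := by
  induction s using Multiset.induction_on with
  | empty => simp
  | cons a s ih =>
    simp only [Multiset.map_cons, Multiset.prod_cons]
    have hg0 : ∀ x ∈ s, 0 ≤ g x := fun x hx => h0 x (Multiset.mem_cons_of_mem hx)
    have hga : 0 ≤ g a := h0 a (Multiset.mem_cons_self a s)
    exact mul_le_mul (hle a (Multiset.mem_cons_self a s))
      (ih hg0 fun x hx => hle x (Multiset.mem_cons_of_mem hx))
      (msprod_nonneg hg0) (hga.trans (hle a (Multiset.mem_cons_self a s)))

lemma na_eq (va : AbsoluteValue k ℝ) (hna : IsNA va) {x y : k} (h : va y < va x) :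
    va (x + y) = va x := by
  refine le_antisymm ((hna x y).trans (by simp [h.le])) ?_
  by_contra hlt
  push_neg at hlt
  have : va x = va ((x + y) + (-y)) := by ring_nf
  rw [this] at hlt h
  have := (hna (x + y) (-y)).trans_lt (max_lt hlt (by rwa [va.map_neg]))
  exact absurd this (lt_irrefl _)

lemma na_sub_eq (va : AbsoluteValue k ℝ) (hna : IsNA va) {x y : k} (h : va x ≠ va y) :
    va (x - y) = max (va x) (va y) := by
  rcases h.lt_or_gt with hlt | hlt
  · rw [va.map_sub, max_eq_right hlt.le]
    have : y - x = y + (-x) := by ring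
    rw [this, na_eq va hna (by rwa [va.map_neg])]
  · rw [max_eq_left hlt.le]
    have : x - y = x + (-y) := by ring
    rw [this, na_eq va hna (by rwa [va.map_neg])]

/-- Density of the value group. -/
lemma dense_val (va : AbsoluteValue k ℝ) [IsAlgClosed k]
    (hnt : ∃ c : k, c ≠ 0 ∧ va c ≠ 1) {u v : ℝ} (hu : 0 < u) (huv : u < v) :
    ∃ x : k, x ≠ 0 ∧ u < va x ∧ va x < v := by
  -- get c with 0 < va c < 1
  obtain ⟨c₀, hc₀, hc₁⟩ := hnt
  obtain ⟨c, hc0, hclt⟩ : ∃ c : k, c ≠ 0 ∧ va c < 1 := by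
    rcases lt_or_gt_of_ne hc₁ with h | h
    · exact ⟨c₀, hc₀, h⟩
    · refine ⟨c₀⁻¹, inv_ne_zero hc₀, ?_⟩
      rw [map_inv₀]
      exact inv_lt_one_of_one_lt₀ h
  have hvc : 0 < va c := va.pos hc0
  have hv : 0 < v := hu.trans huv
  have huv1 : u / v < 1 := (div_lt_one hv).2 huv
  have huv0 : 0 < u / v := div_pos hu hv
  obtain ⟨n, hn⟩ := exists_pow_lt_of_lt_one (mul_pos hvc hvc) huv1
  have hn0 : 0 < n := by
    rcases Nat.eq_zero_or_pos n with h | h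
    · exfalso; rw [h, pow_zero] at hn; nlinarith
    · exact h
  obtain ⟨t, ht⟩ := IsAlgClosed.exists_pow_nat_eq c hn0
  have ht0 : t ≠ 0 := by rintro rfl; simp [zero_pow hn0.ne'] at ht; exact hc0 ht.symm
  set s : ℝ := va t with hs
  have hs0 : 0 < s := va.pos ht0
  have hsn : s ^ n = va c := by rw [hs, ← va.map_pow, ht]
  have hs1 : s < 1 := by
    by_contra hge
    push_neg at hge
    have : (1:ℝ) ≤ s ^ n := one_le_pow₀ hge
    rw [hsn] at this; linarith
  have hs2 : u / v < s ^ 2 := by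
    by_contra hge
    push_neg at hge
    have : (s ^ 2) ^ n ≤ (u / v) ^ n := pow_le_pow_left₀ (by positivity) hge n
    rw [← pow_mul, mul_comm, pow_mul, hsn] at this
    linarith
  set h : ℝ := s⁻¹ with hh
  have hh1 : 1 < h := (one_lt_inv₀ hs0).2 hs1
  have hh0 : 0 < h := lt_trans one_pos hh1
  obtain ⟨m, hm1, hm2⟩ := exists_mem_Ioc_zpow hu hh1
  refine ⟨t⁻¹ ^ (m + 2), ?_, ?_, ?_⟩
  · exact zpow_ne_zero _ (inv_ne_zero ht0)
  · have : va (t⁻¹ ^ (m + 2)) = h ^ (m + 2) := by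
      rw [map_zpow₀, map_inv₀]
    rw [this]
    have : h ^ (m + 2) = h ^ (m + 1) * h := by
      rw [show m + 2 = (m + 1) + 1 by ring, zpow_add_one₀ hh0.ne']
    rw [this]
    calc u = u * 1 := by ring
    _ < h ^ (m + 1) * h := by
        apply mul_lt_mul' hm2 hh1 zero_le_one
        positivity
  · have hva : va (t⁻¹ ^ (m + 2)) = h ^ (m + 2) := by
      rw [map_zpow₀, map_inv₀]
    rw [hva]
    have hsplit : h ^ (m + 2) = h ^ m * h ^ 2 := by
      rw [← zpow_natCast h 2, ← zpow_add₀ hh0.ne']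
      norm_num
    rw [hsplit]
    have hh2 : h ^ 2 < v / u := by
      rw [hh, inv_pow]
      have : (s ^ 2)⁻¹ < (u / v)⁻¹ := by
        apply inv_strictAnti₀ huv0 hs2
      rwa [inv_div] at this
    calc h ^ m * h ^ 2 < u * (v / u) := by
          apply mul_lt_mul hm1 hh2.le (by positivity) hu.le
    _ = v := by field_simp



open Polynomial in
lemma eval_abs (va : AbsoluteValue k ℝ) [IsAlgClosed k] {f : Polynomial k} (hf : f ≠ 0)
    (y : k) :
    va (f.eval y) = va f.leadingCoeff * (f.roots.map fun b => va (y - b)).prod := by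
  conv_lhs => rw [Splits.eq_prod_roots (IsAlgClosed.splits f)]
  rw [eval_mul, eval_C, map_mul, eval_multiset_prod, Multiset.map_map,
    map_multiset_prod va, Multiset.map_map]
  congr 2
  ext b
  simp

open Polynomial in
/-- key point in the ball avoiding finitely many absolute values -/
lemma exists_pt (va : AbsoluteValue k ℝ) [IsAlgClosed k] (hnt : ∃ c : k, c ≠ 0 ∧ va c ≠ 1)
    (a : k) {r : ℝ} (hr : 0 < r) (F : Finset ℝ) {q : ℝ} (hq0 : 0 < q) (hq1 : q < 1) :
    ∃ y : k, va (y - a) ≤ r ∧ q * r < va (y - a) ∧ va (y - a) ∉ F := by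
  set G : Finset ℝ := insert (q * r) (F.filter (· < r)) with hG
  have hGne : G.Nonempty := ⟨q * r, Finset.mem_insert_self _ _⟩
  set u : ℝ := G.max' hGne with hu
  have hur : u < r := by
    rw [hu]
    apply Finset.max'_lt_iff G hGne |>.2
    intro x hx
    rcases Finset.mem_insert.1 hx with rfl | hx
    · nlinarith
    · exact (Finset.mem_filter.1 hx).2
  have hqu : q * r ≤ u := Finset.le_max' G _ (Finset.mem_insert_self _ _)
  have hu0 : 0 < u := lt_of_lt_of_le (by positivity) hqu
  obtain ⟨x, hx0, hxu, hxr⟩ := dense_val va hnt hu0 hur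
  refine ⟨a + x, ?_, ?_, ?_⟩
  · simpa using hxr.le
  · simpa using lt_of_le_of_lt hqu hxu
  · simp only [add_sub_cancel_left]
    intro hmem
    have : va x ∈ G := Finset.mem_insert_of_mem (Finset.mem_filter.2 ⟨hmem, hxr⟩)
    exact absurd (Finset.le_max' G _ this) (not_le.2 hxu)

open Polynomial in
lemma supBall_formula (va : AbsoluteValue k ℝ) [IsAlgClosed k] (hna : IsNA va)
    (hnt : ∃ c : k, c ≠ 0 ∧ va c ≠ 1) (a : k) {r : ℝ} (hr : 0 ≤ r)
    {f : Polynomial k} (hf : f ≠ 0) :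
    supBall va a r f
      = va f.leadingCoeff * (f.roots.map fun b => max r (va (b - a))).prod := by
  set c := f.leadingCoeff with hc
  set Cst : ℝ := va c * (f.roots.map fun b => max r (va (b - a))).prod with hCst
  have hball : a ∈ {y : k | va (y - a) ≤ r} := by simp [hr]
  have hbound : ∀ y ∈ {y : k | va (y - a) ≤ r}, va (f.eval y) ≤ Cst := by
    intro y hy
    rw [eval_abs va hf y, hCst]
    apply mul_le_mul_of_nonneg_left _ (va.nonneg c)
    apply msprod_le (fun b _ => va.nonneg _)
    intro b _
    have : y - b = (y - a) + (a - b) := by ring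
    rw [this]
    refine (hna _ _).trans (max_le_max hy ?_)
    rw [va.map_sub]
  have hne : ((fun y => va (f.eval y)) '' {y : k | va (y - a) ≤ r}).Nonempty :=
    ⟨_, Set.mem_image_of_mem _ hball⟩
  have hbdd : BddAbove ((fun y => va (f.eval y)) '' {y : k | va (y - a) ≤ r}) := by
    refine ⟨Cst, ?_⟩
    rintro _ ⟨y, hy, rfl⟩
    exact hbound y hy
  refine le_antisymm ?_ ?_
  · apply csSup_le hne
    rintro _ ⟨y, hy, rfl⟩
    exact hbound y hy
  · -- lower bound
    rcases eq_or_lt_of_le hr with rfl | hrpos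
    · -- r = 0
      have hmc : (f.roots.map fun b => max (0:ℝ) (va (b - a)))
          = f.roots.map fun b => va (a - b) := by
        apply Multiset.map_congr rfl
        intro b _
        rw [max_eq_right (va.nonneg _), va.map_sub]
      have : Cst = va (f.eval a) := by
        rw [hCst, eval_abs va hf a, hmc]
      rw [this]
      exact le_csSup hbdd (Set.mem_image_of_mem _ hball)
    · -- r > 0 : for every q ∈ (0,1), q^n * Cst ≤ supBall
      set n := Multiset.card f.roots with hn
      have key : ∀ q ∈ Set.Ioo (0:ℝ) 1, q ^ n * Cst ≤ supBall va a r f := by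
        intro q hq
        obtain ⟨y, hy1, hy2, hy3⟩ := exists_pt va hnt a hrpos
          ((f.roots.map fun b => va (b - a)).toFinset) hq.1 hq.2
        have heval : va (f.eval y)
            = va c * (f.roots.map fun b => va (y - b)).prod := eval_abs va hf y
        have hfac : ∀ b ∈ f.roots, q * max r (va (b - a)) ≤ va (y - b) := by
          intro b hb
          have hne' : va (y - a) ≠ va (b - a) := by
            intro hEq
            apply hy3
            rw [hEq]
            exact Multiset.mem_toFinset.2 (Multiset.mem_map_of_mem _ hb)
          have : y - b = (y - a) - (b - a) := by ring
          rw [this, na_sub_eq va hna hne']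
          rcases le_total r (va (b - a)) with hcase | hcase
          · calc q * max r (va (b - a)) = q * va (b - a) := by rw [max_eq_right hcase]
            _ ≤ 1 * va (b - a) := by
                apply mul_le_mul_of_nonneg_right hq.2.le (va.nonneg _)
            _ = va (b - a) := one_mul _
            _ ≤ max (va (y - a)) (va (b - a)) := le_max_right _ _
          · calc q * max r (va (b - a)) = q * r := by rw [max_eq_left hcase]
            _ ≤ va (y - a) := hy2.le
            _ ≤ max (va (y - a)) (va (b - a)) := le_max_left _ _
        have hprod : q ^ n * (f.roots.map fun b => max r (va (b - a))).prod
            ≤ (f.roots.map fun b => va (y - b)).prod := by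
          have h1 : (f.roots.map fun b => q * max r (va (b - a))).prod
              = q ^ n * (f.roots.map fun b => max r (va (b - a))).prod := by
            rw [Multiset.prod_map_mul]
            congr 1
            simp [hn]
          rw [← h1]
          apply msprod_le
          · intro b _
            exact mul_nonneg hq.1.le (le_trans hr (le_max_left _ _))
          · exact hfac
        have : q ^ n * Cst ≤ va (f.eval y) := by
          rw [heval, hCst]
          calc q ^ n * (va c * (f.roots.map fun b => max r (va (b - a))).prod)
              = va c * (q ^ n * (f.roots.map fun b => max r (va (b - a))).prod) := by ring
          _ ≤ va c * (f.roots.map fun b => va (y - b)).prod :=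
              mul_le_mul_of_nonneg_left hprod (va.nonneg _)
        exact this.trans (le_csSup hbdd (Set.mem_image_of_mem _ hy1))
      -- take the limit q → 1⁻
      have hlim : Filter.Tendsto (fun q : ℝ => q ^ n * Cst) (nhdsWithin 1 (Set.Iio 1))
          (nhds Cst) := by
        have : Filter.Tendsto (fun q : ℝ => q ^ n * Cst) (nhds 1) (nhds (1 ^ n * Cst)) :=
          ((continuous_pow n).mul continuous_const).tendsto 1
        rw [one_pow, one_mul] at this
        exact this.mono_left nhdsWithin_le_nhds
      apply le_of_tendsto hlim
      filter_upwards [Ioo_mem_nhdsLT_of_mem (by constructor <;> norm_num :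
        (1:ℝ) ∈ Set.Ioc (0:ℝ) 1)] with q hq
      exact key q hq


open Polynomial in
lemma supBall_zero (va : AbsoluteValue k ℝ) (a : k) {r : ℝ} (hr : 0 ≤ r) :
    supBall va a r (0 : Polynomial k) = 0 := by
  have hball : a ∈ {y : k | va (y - a) ≤ r} := by simp [hr]
  have : (fun y : k => va (Polynomial.eval y (0 : Polynomial k))) = fun _ => (0:ℝ) := by
    funext y; simp
  rw [supBall, this, Set.Nonempty.image_const ⟨a, hball⟩, csSup_singleton]

end S9



open Polynomial S9 in
/-- Let `k` be an algebraically closed field, complete with respect to a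
nontrivial nonarchimedean absolute value `va`, and let `N` be a multiplicative seminorm
on `k[T]` extending `va`.  Then there exists a nonempty family of closed balls
`(B(aⱼ, rⱼ))_{j ∈ J}` in `k` (with radii `rⱼ ≥ 0`), totally ordered by inclusion, such
that `N(f) = inf_j sup_{y ∈ B(aⱼ,rⱼ)} |f(y)|` for all `f ∈ k[T]`.  (In particular every
point of the Berkovich affine line over `k` is of one of the types I–IV.) -/
theorem statement9 {k : Type*} [Field k] [IsAlgClosed k]
    (va : AbsoluteValue k ℝ) (hna : IsNA va)
    (hnt : ∃ c : k, c ≠ 0 ∧ va c ≠ 1) (hcomplete : SeqComplete va)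
    (N : Polynomial k → ℝ)
    (hN0 : ∀ f : Polynomial k, 0 ≤ N f)
    (hNmul : ∀ f g : Polynomial k, N (f * g) = N f * N g)
    (hNmax : ∀ f g : Polynomial k, N (f + g) ≤ max (N f) (N g))
    (hNconst : ∀ c : k, N (Polynomial.C c) = va c) :
    ∃ (J : Type) (_ : Nonempty J) (a : J → k) (rr : J → ℝ),
      (∀ j, 0 ≤ rr j) ∧
      (∀ i j : J,
        {y : k | va (y - a i) ≤ rr i} ⊆ {y : k | va (y - a j) ≤ rr j} ∨
        {y : k | va (y - a j) ≤ rr j} ⊆ {y : k | va (y - a i) ≤ rr i}) ∧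
      (∀ f : Polynomial k, N f = ⨅ j, supBall va (a j) (rr j) f) := by
  classical
  set ρ : k → ℝ := fun a => N (X - C a) with hρ
  have hρ0 : ∀ a, 0 ≤ ρ a := fun a => hN0 _
  have hN1 : N 1 = 1 := by
    have := hNconst 1; rwa [map_one, map_one] at this
  have hNzero : N 0 = 0 := by
    have := hNconst 0; rwa [map_zero, map_zero] at this
  have hNneg : ∀ g, N (-g) = N g := by
    intro g
    have : -g = C (-1) * g := by ring_nf; rw [map_neg, map_one]; ring
    rw [this, hNmul, hNconst, va.map_neg, map_one, one_mul]
  have hNsub : ∀ g h, N (g - h) ≤ max (N g) (N h) := by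
    intro g h
    have : g - h = g + (-h) := by ring
    rw [this]
    exact (hNmax g (-h)).trans (by rw [hNneg])
  have hdist : ∀ a b : k, va (a - b) ≤ max (ρ a) (ρ b) := by
    intro a b
    have h1 : C (a - b) = (X - C b) - (X - C a) := by rw [map_sub]; ring
    have := hNsub (X - C b) (X - C a)
    rw [← h1, hNconst] at this
    exact this.trans (by rw [max_comm])
  -- the monoid hom version of N
  set Nh : Polynomial k →* ℝ := ⟨⟨N, hN1⟩, hNmul⟩ with hNh
  have hNf : ∀ f : Polynomial k, f ≠ 0 →
      N f = va f.leadingCoeff * (f.roots.map fun b => ρ b).prod := by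
    intro f hf
    conv_lhs => rw [Splits.eq_prod_roots (IsAlgClosed.splits f)]
    show Nh _ = _
    rw [map_mul, map_multiset_prod Nh, Multiset.map_map]
    congr 1
    · exact hNconst _
  -- choose a sequence approximating the infimum of ρ
  set ρstar : ℝ := ⨅ a : k, ρ a with hρstar
  have hbddρ : BddBelow (Set.range ρ) := ⟨0, by rintro _ ⟨a, rfl⟩; exact hρ0 a⟩
  have hseq' : ∀ n : ℕ, ∃ a : k, ρ a < ρstar + 1 / ((n:ℝ) + 1) := by
    intro n
    apply exists_lt_of_ciInf_lt
    have : 0 < 1 / ((n:ℝ) + 1) := by positivity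
    linarith [lt_add_of_pos_right ρstar this]
  choose seq hseq using hseq'
  refine ⟨ℕ, ⟨0⟩, seq, fun n => ρ (seq n), fun n => hρ0 _, ?_, ?_⟩
  · -- total ordering of the balls
    intro i' j'
    set i := seq i'
    set j := seq j'
    rcases le_total (ρ i) (ρ j) with hij | hij
    · left
      intro y hy
      simp only [Set.mem_setOf_eq] at hy ⊢
      have : y - j = (y - i) + (i - j) := by ring
      rw [this]
      refine (hna _ _).trans (max_le (hy.trans hij) ?_)
      exact (hdist i j).trans (max_le hij le_rfl)
    · right
      intro y hy
      simp only [Set.mem_setOf_eq] at hy ⊢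
      have : y - i = (y - j) + (j - i) := by ring
      rw [this]
      refine (hna _ _).trans (max_le (hy.trans hij) ?_)
      exact (hdist j i).trans (max_le hij le_rfl)
  · intro f
    rcases eq_or_ne f 0 with rfl | hf
    · simp only [hNzero]
      rw [show (⨅ n : ℕ, supBall va (seq n) (ρ (seq n)) 0) = ⨅ n : ℕ, (0:ℝ) from by
        congr 1; funext n; exact supBall_zero va (seq n) (hρ0 (seq n)), ciInf_const]
    · -- nonzero polynomial
      set c := f.leadingCoeff with hc
      have hform : ∀ a : k, supBall va a (ρ a) f
          = va c * (f.roots.map fun b => max (ρ a) (va (b - a))).prod :=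
        fun a => supBall_formula va hna hnt a (hρ0 a) hf
      have hsupnn : ∀ a : k, 0 ≤ supBall va a (ρ a) f := by
        intro a
        rw [hform a]
        exact mul_nonneg (va.nonneg _) (msprod_nonneg fun b _ =>
          le_trans (hρ0 a) (le_max_left _ _))
      have hbddb : BddBelow (Set.range fun n : ℕ => supBall va (seq n) (ρ (seq n)) f) := by
        refine ⟨0, ?_⟩
        rintro _ ⟨n, rfl⟩
        exact hsupnn _
    -- root distance bound: va (b - a) > ρ a → va (b - a) ≤ ρ b
      have hroot : ∀ a b : k, va (b - a) ≤ max (ρ a) (ρ b) := by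
        intro a b; rw [va.map_sub]; exact (hdist a b).trans (by rw [max_comm]) |>.trans le_rfl
      refine le_antisymm ?_ ?_
      · -- N f ≤ inf
        apply le_ciInf
        intro n
        set a := seq n
        rw [hform a, hNf f hf]
        apply mul_le_mul_of_nonneg_left _ (va.nonneg _)
        apply msprod_le (fun b _ => hρ0 b)
        intro b _
        -- ρ b ≤ max (ρ a) (va (b - a))
        have h1 : (X : Polynomial k) - C b = (X - C a) + C (a - b) := by
          rw [map_sub]; ring
        have := hNmax (X - C a) (C (a - b))
        rw [← h1, hNconst] at this
        exact this.trans (max_le_max le_rfl (by rw [va.map_sub]))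
      · -- inf ≤ N f
        have key : ∀ δ : ℝ, 0 < δ →
            (⨅ n : ℕ, supBall va (seq n) (ρ (seq n)) f)
              ≤ va c * (f.roots.map fun b => ρ b + δ).prod := by
          intro δ hδ
          obtain ⟨n, hn⟩ := exists_nat_one_div_lt hδ
          set a := seq n with haa
          have ha : ρ a < ρstar + δ := by
            have := hseq n
            have h2 : 1 / ((n:ℝ) + 1) < δ := hn
            linarith
          refine (ciInf_le hbddb n).trans ?_
          rw [hform a]
          apply mul_le_mul_of_nonneg_left _ (va.nonneg _)
          apply msprod_le (fun b _ => le_trans (hρ0 a) (le_max_left _ _))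
          intro b _
          apply max_le
          · have : ρstar ≤ ρ b := ciInf_le hbddρ b
            linarith
          · rcases le_or_gt (va (b - a)) (ρ a) with hcase | hcase
            · have : ρstar ≤ ρ b := ciInf_le hbddρ b
              linarith
            · have h2 := hroot a b
              rcases max_cases (ρ a) (ρ b) with ⟨hEq, _⟩ | ⟨hEq, _⟩
              · rw [hEq] at h2; linarith
              · rw [hEq] at h2; linarith
        have hlim : Filter.Tendsto
            (fun δ : ℝ => va c * (f.roots.map fun b => ρ b + δ).prod)
            (nhdsWithin 0 (Set.Ioi 0)) (nhds (N f)) := by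
          have hcont : Continuous
              (fun δ : ℝ => va c * (f.roots.map fun b => ρ b + δ).prod) := by
            apply continuous_const.mul
            apply continuous_multiset_prod
            intro b _
            exact continuous_const.add continuous_id
          have := hcont.tendsto 0
          have heval : va c * (f.roots.map fun b => ρ b + (0:ℝ)).prod = N f := by
            rw [hNf f hf]
            congr 1
            apply congrArg Multiset.prod
            apply Multiset.map_congr rfl
            intro b _
            rw [add_zero]
          rw [heval] at this
          exact this.mono_left nhdsWithin_le_nhds
        apply ge_of_tendsto hlim
        filter_upwards [self_mem_nhdsWithin] with δ hδ
        exact key δ hδ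

end
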